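/- There exists a constant C > 0 depending only on n with the following property: for every n ≥ 3 and every Kähler curvature-type tensor R on ℂ^n whose traceless bisectional curvature operator is 2-nonnegative, one has |R(i,j,k,l)| ≤ C·r for all indices i, j, k, l, where r is the scalar curvature of R (in particular r ≥ 0). -/

import Mathlib

open BigOperators

/-- A Kähler curvature-type tensor on `ℂ^n`: `R i j k l` stands for `R_{i j̄ k l̄}` in a
unitary frame, with the symmetries `R_{i j̄ k l̄} = R_{k j̄ i l̄}`, `R_{i j̄ k l̄} = R_{i l̄ k j̄}`
and the reality condition `conj R_{i j̄ k l̄} = R_{j ī l k̄}`. -/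
def IsKahlerCurvTensor {n : ℕ} (R : Fin n → Fin n → Fin n → Fin n → ℂ) : Prop :=
  (∀ i j k l, R i j k l = R k j i l) ∧
  (∀ i j k l, R i j k l = R i l k j) ∧
  (∀ i j k l, starRingEnd ℂ (R i j k l) = R j i l k)

/-- The Ricci tensor `Ric(i,j) = Σ_k R(i,j,k,k)` of a curvature-type tensor. -/
noncomputable def ricci {n : ℕ} (R : Fin n → Fin n → Fin n → Fin n → ℂ) (i j : Fin n) : ℂ :=
  ∑ k, R i j k k

/-- The scalar curvature `r = Σ_i Re(Ric(i,i))` of a curvature-type tensor. -/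
noncomputable def scalarCurv {n : ℕ} (R : Fin n → Fin n → Fin n → Fin n → ℂ) : ℝ :=
  ∑ i, (ricci R i i).re

/-- `η` belongs to `H₀`, the real vector space of trace-free Hermitian `n × n` matrices
(identified with traceless real `(1,1)`-forms). -/
def MemH0 {n : ℕ} (η : Matrix (Fin n) (Fin n) ℂ) : Prop :=
  η.IsHermitian ∧ η.trace = 0

/-- The inner product `⟨η,τ⟩ = Re Tr(ητ)` on Hermitian matrices. -/
noncomputable def h0Inner {n : ℕ} (η τ : Matrix (Fin n) (Fin n) ℂ) : ℝ :=
  (Matrix.trace (η * τ)).re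

/-- The (real-valued) symmetric bilinear form `ℛ(η,τ) = Σ R(i,j,k,l)·η(j,i)·τ(l,k)`
induced by a curvature-type tensor on Hermitian matrices. -/
noncomputable def curvForm {n : ℕ} (R : Fin n → Fin n → Fin n → Fin n → ℂ)
    (η τ : Matrix (Fin n) (Fin n) ℂ) : ℝ :=
  (∑ i, ∑ j, ∑ k, ∑ l, R i j k l * η j i * τ l k).re

/-- The traceless bisectional curvature operator of `R` is nonnegative:
`ℛ(η,η) ≥ 0` for every `η ∈ H₀`. -/
def NonnegTBC {n : ℕ} (R : Fin n → Fin n → Fin n → Fin n → ℂ) : Prop :=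
  ∀ η : Matrix (Fin n) (Fin n) ℂ, MemH0 η → 0 ≤ curvForm R η η

/-- The traceless bisectional curvature operator of `R` is 2-nonnegative:
`ℛ(η,η) + ℛ(τ,τ) ≥ 0` for all orthonormal pairs `η, τ ∈ H₀`. -/
def TwoNonnegTBC {n : ℕ} (R : Fin n → Fin n → Fin n → Fin n → ℂ) : Prop :=
  ∀ η τ : Matrix (Fin n) (Fin n) ℂ, MemH0 η → MemH0 τ →
    h0Inner η η = 1 → h0Inner τ τ = 1 → h0Inner η τ = 0 →
    0 ≤ curvForm R η η + curvForm R τ τ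

open Module


local notation "⟪" x ", " y "⟫" => @inner ℝ _ _ x y

lemma pairSum_nonneg {ι : Type*} [DecidableEq ι] (s : Finset ι) (t : ι → ℝ) (hcard : 2 ≤ s.card)
    (h : ∀ i ∈ s, ∀ j ∈ s, i ≠ j → 0 ≤ t i + t j) : 0 ≤ ∑ i ∈ s, t i := by
  by_cases hall : ∀ i ∈ s, 0 ≤ t i
  · exact Finset.sum_nonneg hall
  · push_neg at hall
    obtain ⟨i₀, hi₀s, hi₀⟩ := hall
    have hrest : ∀ j ∈ s.erase i₀, -t i₀ ≤ t j := by
      intro j hj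
      have hj' := Finset.mem_of_mem_erase hj
      have hne : j ≠ i₀ := Finset.ne_of_mem_erase hj
      have := h j hj' i₀ hi₀s hne
      linarith
    have hcard' : 1 ≤ (s.erase i₀).card := by
      have := Finset.card_erase_of_mem hi₀s
      omega
    have hsum : ((s.erase i₀).card : ℝ) * (-t i₀) ≤ ∑ j ∈ s.erase i₀, t j := by
      have := Finset.card_nsmul_le_sum (s.erase i₀) t (-t i₀) hrest
      rwa [nsmul_eq_mul] at this
    have h1 : -t i₀ ≤ ((s.erase i₀).card : ℝ) * (-t i₀) := by
      have hpos : 0 < -t i₀ := by linarith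
      calc -t i₀ = 1 * (-t i₀) := by ring
        _ ≤ ((s.erase i₀).card : ℝ) * (-t i₀) := by
            apply mul_le_mul_of_nonneg_right _ (le_of_lt hpos)
            exact_mod_cast hcard'
    linarith [Finset.add_sum_erase s t hi₀s]

variable {F : Type*} [NormedAddCommGroup F] [InnerProductSpace ℝ F] [FiniteDimensional ℝ F]

lemma bilin_expand {N : ℕ} (b : OrthonormalBasis (Fin N) ℝ F) (B : F →ₗ[ℝ] F →ₗ[ℝ] ℝ)
    (x y : F) : B x y = ∑ j, ∑ k, ⟪b j, x⟫ * ⟪b k, y⟫ * B (b j) (b k) := by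
  conv_lhs => rw [← b.sum_repr' x, ← b.sum_repr' y]
  simp only [map_sum, LinearMap.sum_apply, map_smul, LinearMap.smul_apply, smul_eq_mul,
    Finset.mul_sum, Finset.sum_mul]
  rw [Finset.sum_comm]
  refine Finset.sum_congr rfl fun j _ => Finset.sum_congr rfl fun k _ => by ring

lemma traceInv {N : ℕ} (b f : OrthonormalBasis (Fin N) ℝ F) (B : F →ₗ[ℝ] F →ₗ[ℝ] ℝ) :
    ∑ i, B (f i) (f i) = ∑ i, B (b i) (b i) := by
  rw [Finset.sum_congr rfl (fun i _ => bilin_expand b B (f i) (f i))]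
  rw [Finset.sum_comm]
  have : ∀ j, ∑ i, ∑ k, ⟪b j, f i⟫ * ⟪b k, f i⟫ * B (b j) (b k)
      = ∑ k, (∑ i, ⟪b j, f i⟫ * ⟪f i, b k⟫) * B (b j) (b k) := by
    intro j
    rw [Finset.sum_comm]
    refine Finset.sum_congr rfl fun k _ => ?_
    rw [Finset.sum_mul]
    refine Finset.sum_congr rfl fun i _ => by rw [real_inner_comm (f i) (b k)]
  rw [Finset.sum_congr rfl (fun j _ => this j)]
  refine Finset.sum_congr rfl fun j _ => ?_
  have par : ∀ k, (∑ i, ⟪b j, f i⟫ * ⟪f i, b k⟫) = if j = k then (1:ℝ) else 0 := by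
    intro k
    rw [f.sum_inner_mul_inner (b j) (b k)]
    have := b.orthonormal
    rw [orthonormal_iff_ite] at this
    simpa using this j k
  rw [Finset.sum_congr rfl (fun k _ => by rw [par k])]
  simp

lemma lemA {N : ℕ} (hN : 3 ≤ N) (hrank : finrank ℝ F = N)
    (b : OrthonormalBasis (Fin N) ℝ F) (B : F →ₗ[ℝ] F →ₗ[ℝ] ℝ)
    (h2 : ∀ x y : F, ‖x‖ = 1 → ‖y‖ = 1 → ⟪x,y⟫ = 0 → 0 ≤ B x x + B y y) :
    0 ≤ ∑ i, B (b i) (b i) ∧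
    ∀ x : F, |B x x| ≤ (∑ i, B (b i) (b i)) * ⟪x, x⟫ := by
  haveI : NeZero N := ⟨by omega⟩
  set T := ∑ i, B (b i) (b i) with hT
  have hext : ∀ x : F, ‖x‖ = 1 → ∃ f : OrthonormalBasis (Fin N) ℝ F, f 0 = x := by
    intro x hx
    have hcard : finrank ℝ F = Fintype.card (Fin N) := by simp [hrank]
    have horth : Orthonormal ℝ (Set.restrict {(0 : Fin N)} (fun _ => x)) := by
      constructor
      · intro i; exact hx
      · intro i j hij
        exact absurd (Subtype.ext (by
          have hi := i.2; have hj := j.2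
          simp only [Set.mem_singleton_iff] at hi hj
          rw [hi, hj])) hij
    obtain ⟨f, hf⟩ := horth.exists_orthonormalBasis_extension_of_card_eq hcard
    exact ⟨f, by simpa using hf 0 (by simp)⟩
  have hpair : ∀ (f : OrthonormalBasis (Fin N) ℝ F) (i j : Fin N), i ≠ j →
      0 ≤ B (f i) (f i) + B (f j) (f j) := by
    intro f i j hij
    exact h2 _ _ (f.orthonormal.1 i) (f.orthonormal.1 j) (f.orthonormal.2 hij)
  have hTnn : 0 ≤ T := by
    rw [hT]
    apply pairSum_nonneg Finset.univ _ (by simp; omega)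
    intro i _ j _ hij
    exact hpair b i j hij
  have hdiag : ∀ (f : OrthonormalBasis (Fin N) ℝ F) (i : Fin N), B (f i) (f i) ≤ T := by
    intro f i
    have hsum : ∑ j, B (f j) (f j) = T := traceInv b f B
    have herase : 0 ≤ ∑ j ∈ Finset.univ.erase i, B (f j) (f j) := by
      apply pairSum_nonneg _ _ (by rw [Finset.card_erase_of_mem (Finset.mem_univ i)]; simp; omega)
      intro a _ c _ hac
      exact hpair f a c hac
    have := Finset.add_sum_erase Finset.univ (fun j => B (f j) (f j)) (Finset.mem_univ i)
    linarith
  have hunit : ∀ x : F, ‖x‖ = 1 → |B x x| ≤ T := by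
    intro x hx
    obtain ⟨f, hf⟩ := hext x hx
    have hup : B x x ≤ T := by have := hdiag f 0; rwa [hf] at this
    have hlow : -T ≤ B x x := by
      have h01 : (0 : Fin N) ≠ 1 := by
        simp [Fin.ext_iff]; omega
      have := hpair f 0 1 h01
      have h1 := hdiag f 1
      rw [hf] at this
      linarith
    rw [abs_le]; exact ⟨hlow, hup⟩
  refine ⟨hTnn, fun x => ?_⟩
  by_cases hx : x = 0
  · simp [hx]
  · have hn : ‖x‖ ≠ 0 := norm_ne_zero_iff.mpr hx
    set u := ‖x‖⁻¹ • x with hu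
    have hnu : ‖u‖ = 1 := norm_smul_inv_norm hx
    have hxu : x = ‖x‖ • u := by
      rw [hu, smul_smul, mul_inv_cancel₀ hn, one_smul]
    have hBx : B x x = ‖x‖^2 * B u u := by
      conv_lhs => rw [hxu]
      simp only [map_smul, LinearMap.smul_apply, smul_eq_mul]
      ring
    rw [hBx, real_inner_self_eq_norm_sq, abs_mul, abs_pow, abs_norm]
    calc ‖x‖^2 * |B u u| ≤ ‖x‖^2 * T :=
          mul_le_mul_of_nonneg_left (hunit u hnu) (by positivity)
      _ = T * ‖x‖^2 := by ring


-- ambient statement defs (copied)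
namespace KCT

variable {n : ℕ}

/-- complex bilinear curvature form -/
noncomputable def CB (R : Fin n → Fin n → Fin n → Fin n → ℂ)
    (η τ : Matrix (Fin n) (Fin n) ℂ) : ℂ :=
  ∑ i, ∑ j, ∑ k, ∑ l, R i j k l * η j i * τ l k

lemma curvForm_eq_CB (R : Fin n → Fin n → Fin n → Fin n → ℂ) (η τ : Matrix (Fin n) (Fin n) ℂ) :
    curvForm R η τ = (CB R η τ).re := rfl

lemma CB_add_left (R : Fin n → Fin n → Fin n → Fin n → ℂ) (η η' τ : Matrix (Fin n) (Fin n) ℂ) :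
    CB R (η + η') τ = CB R η τ + CB R η' τ := by
  unfold CB
  simp only [Matrix.add_apply, mul_add, add_mul, Finset.sum_add_distrib]

lemma CB_add_right (R : Fin n → Fin n → Fin n → Fin n → ℂ) (η τ τ' : Matrix (Fin n) (Fin n) ℂ) :
    CB R η (τ + τ') = CB R η τ + CB R η τ' := by
  unfold CB
  simp only [Matrix.add_apply, mul_add, add_mul, Finset.sum_add_distrib]

lemma CB_smul_left (R : Fin n → Fin n → Fin n → Fin n → ℂ) (z : ℂ) (η τ : Matrix (Fin n) (Fin n) ℂ) :
    CB R (z • η) τ = z * CB R η τ := by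
  unfold CB
  simp only [Matrix.smul_apply, smul_eq_mul, Finset.mul_sum]
  refine Finset.sum_congr rfl fun i _ => Finset.sum_congr rfl fun j _ =>
    Finset.sum_congr rfl fun k _ => Finset.sum_congr rfl fun l _ => by ring

lemma CB_smul_right (R : Fin n → Fin n → Fin n → Fin n → ℂ) (z : ℂ) (η τ : Matrix (Fin n) (Fin n) ℂ) :
    CB R η (z • τ) = z * CB R η τ := by
  unfold CB
  simp only [Matrix.smul_apply, smul_eq_mul, Finset.mul_sum]
  refine Finset.sum_congr rfl fun i _ => Finset.sum_congr rfl fun j _ =>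
    Finset.sum_congr rfl fun k _ => Finset.sum_congr rfl fun l _ => by ring

lemma CB_sub_left (R : Fin n → Fin n → Fin n → Fin n → ℂ) (η η' τ : Matrix (Fin n) (Fin n) ℂ) :
    CB R (η - η') τ = CB R η τ - CB R η' τ := by
  have : η - η' = η + (-1 : ℂ) • η' := by ext a b; simp [Matrix.sub_apply]; ring
  rw [this, CB_add_left, CB_smul_left]; ring

lemma CB_sub_right (R : Fin n → Fin n → Fin n → Fin n → ℂ) (η τ τ' : Matrix (Fin n) (Fin n) ℂ) :
    CB R η (τ - τ') = CB R η τ - CB R η τ' := by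
  have : τ - τ' = τ + (-1 : ℂ) • τ' := by ext a b; simp [Matrix.sub_apply]; ring
  rw [this, CB_add_right, CB_smul_right]; ring

/-- elementary matrix -/
def Mm (a b : Fin n) : Matrix (Fin n) (Fin n) ℂ :=
  Matrix.of fun x y => if x = a ∧ y = b then 1 else 0

lemma CB_Mm (R : Fin n → Fin n → Fin n → Fin n → ℂ) (a b c d : Fin n) :
    CB R (Mm a b) (Mm c d) = R b a d c := by
  unfold CB Mm
  simp [Finset.sum_ite_eq, Finset.sum_ite_eq', ite_and, mul_ite, ite_mul]

lemma CB_Mm_right (R : Fin n → Fin n → Fin n → Fin n → ℂ) (η : Matrix (Fin n) (Fin n) ℂ)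
    (c d : Fin n) : CB R η (Mm c d) = ∑ i, ∑ j, R i j d c * η j i := by
  unfold CB Mm
  refine Finset.sum_congr rfl fun i _ => Finset.sum_congr rfl fun j _ => ?_
  simp [Finset.sum_ite_eq, Finset.sum_ite_eq', ite_and, mul_ite, ite_mul]

lemma h0Inner_eq (η τ : Matrix (Fin n) (Fin n) ℂ) :
    h0Inner η τ = ∑ a, ∑ b, (η a b * τ b a).re := by
  unfold h0Inner Matrix.trace
  rw [Complex.re_sum]
  refine Finset.sum_congr rfl fun a _ => ?_
  rw [Matrix.diag_apply, Matrix.mul_apply, Complex.re_sum]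

lemma h0Inner_Mm (a b c d : Fin n) :
    h0Inner (Mm a b) (Mm c d) = if a = d ∧ b = c then 1 else 0 := by
  rw [h0Inner_eq]
  unfold Mm
  simp [Finset.sum_ite_eq, Finset.sum_ite_eq', ite_and, mul_ite, ite_mul,
    apply_ite Complex.re, and_comm]
  rcases eq_or_ne a d with h|h <;> rcases eq_or_ne b c with h2|h2 <;>
    simp [h, h2, eq_comm]

end KCT

namespace KCT
variable {n : ℕ}

abbrev Esp (n : ℕ) := EuclideanSpace ℝ (Fin n × Fin n × Fin 2)

noncomputable def Phi (c : Esp n) : Matrix (Fin n) (Fin n) ℂ :=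
  Matrix.of fun a b => (c (a,b,0) : ℂ) + (c (a,b,1) : ℂ) * Complex.I

lemma Phi_apply (c : Esp n) (a b : Fin n) :
    Phi c a b = (c (a,b,0) : ℂ) + (c (a,b,1) : ℂ) * Complex.I := rfl

lemma Phi_add (c d : Esp n) : Phi (c + d) = Phi c + Phi d := by
  ext a b
  simp only [Phi, Matrix.of_apply, Matrix.add_apply, PiLp.add_apply]
  push_cast; ring

lemma Phi_smul (r : ℝ) (c : Esp n) : Phi (r • c) = (r : ℂ) • Phi c := by
  ext a b
  simp only [Phi, Matrix.of_apply, Matrix.smul_apply, PiLp.smul_apply, smul_eq_mul]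
  push_cast; ring

def Wsub (n : ℕ) : Submodule ℝ (Esp n) where
  carrier := {c | (∀ a b : Fin n, c (b,a,0) = c (a,b,0)) ∧
    (∀ a b : Fin n, c (b,a,1) = - c (a,b,1)) ∧ (∑ a, c (a,a,0)) = 0}
  add_mem' := by
    rintro x y ⟨hx1, hx2, hx3⟩ ⟨hy1, hy2, hy3⟩
    refine ⟨fun a b => ?_, fun a b => ?_, ?_⟩
    · simp [PiLp.add_apply, hx1 a b, hy1 a b]
    · simp [PiLp.add_apply, hx2 a b, hy2 a b]; ring
    · simp [PiLp.add_apply, Finset.sum_add_distrib, hx3, hy3]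
  zero_mem' := by
    refine ⟨fun a b => ?_, fun a b => ?_, ?_⟩ <;> simp
  smul_mem' := by
    rintro r x ⟨hx1, hx2, hx3⟩
    refine ⟨fun a b => ?_, fun a b => ?_, ?_⟩
    · simp [PiLp.smul_apply, hx1 a b]
    · simp [PiLp.smul_apply, hx2 a b]
    · simp [PiLp.smul_apply, ← Finset.mul_sum, hx3]

lemma memH0_Phi {c : Esp n} (hc : c ∈ Wsub n) : MemH0 (Phi c) := by
  obtain ⟨h1, h2, h3⟩ := hc
  constructor
  · ext a b
    simp only [Matrix.IsHermitian, Matrix.conjTranspose_apply, Phi_apply, RCLike.star_def,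
      map_add, map_mul, Complex.conj_ofReal, Complex.conj_I]
    rw [h1 b a, h2 b a]  -- note: h1 a b : c (b,a,0) = c (a,b,0); careful with order
    push_cast; ring
  · unfold Matrix.trace
    have hz : ∀ a : Fin n, c (a,a,1) = 0 := by
      intro a; have := h2 a a; linarith
    simp only [Matrix.diag_apply, Phi_apply, hz, Complex.ofReal_zero, zero_mul, add_zero]
    rw [← Complex.ofReal_sum]
    simp [h3]

noncomputable def iota (η : Matrix (Fin n) (Fin n) ℂ) : Esp n :=
  WithLp.toLp 2 (fun q : Fin n × Fin n × Fin 2 => if q.2.2 = 0 then (η q.1 q.2.1).re else (η q.1 q.2.1).im)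

lemma iota_apply_zero (η : Matrix (Fin n) (Fin n) ℂ) (a b : Fin n) :
    iota η (a,b,0) = (η a b).re := rfl
lemma iota_apply_one (η : Matrix (Fin n) (Fin n) ℂ) (a b : Fin n) :
    iota η (a,b,1) = (η a b).im := rfl

lemma Phi_iota (η : Matrix (Fin n) (Fin n) ℂ) : Phi (iota η) = η := by
  ext a b
  simp [Phi_apply, iota_apply_zero, iota_apply_one, Complex.re_add_im]

lemma iota_mem {η : Matrix (Fin n) (Fin n) ℂ} (h : MemH0 η) : iota η ∈ Wsub n := by
  obtain ⟨hH, hT⟩ := h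
  have herm : ∀ a b, η b a = starRingEnd ℂ (η a b) := by
    intro a b
    have := congrFun (congrFun hH.symm b) a
    simpa [Matrix.conjTranspose_apply] using this
  refine ⟨fun a b => ?_, fun a b => ?_, ?_⟩
  · rw [iota_apply_zero, iota_apply_zero, herm a b]; simp
  · rw [iota_apply_one, iota_apply_one, herm a b]; simp
  · have : ∀ a, iota η (a,a,0) = (η a a).re := fun a => rfl
    simp only [this]
    rw [← Complex.re_sum]
    rw [show (∑ a, η a a) = Matrix.trace η from rfl, hT]
    simp

lemma inner_eq_h0Inner (c d : Esp n) (hd : d ∈ Wsub n) :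
    (inner ℝ c d : ℝ) = h0Inner (Phi c) (Phi d) := by
  obtain ⟨h1, h2, _⟩ := hd
  rw [h0Inner_eq]
  rw [PiLp.inner_apply]
  rw [Fintype.sum_prod_type]
  refine Finset.sum_congr rfl fun a _ => ?_
  rw [Fintype.sum_prod_type]
  refine Finset.sum_congr rfl fun b _ => ?_
  rw [Fin.sum_univ_two]
  simp only [RCLike.inner_apply, starRingEnd_apply, star_trivial]
  rw [Phi_apply, Phi_apply, h1 a b, h2 a b]
  simp [add_mul, Complex.mul_re]
  ring
end KCT

namespace KCT
variable {n : ℕ}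

/-- complex trace pairing -/
noncomputable def IP (η τ : Matrix (Fin n) (Fin n) ℂ) : ℂ := ∑ a, ∑ b, η a b * τ b a

lemma h0Inner_eq_IP (η τ : Matrix (Fin n) (Fin n) ℂ) : h0Inner η τ = (IP η τ).re := by
  rw [h0Inner_eq, IP, Complex.re_sum]
  exact Finset.sum_congr rfl fun a _ => (Complex.re_sum _ _).symm

lemma IP_add_left (η η' τ : Matrix (Fin n) (Fin n) ℂ) :
    IP (η + η') τ = IP η τ + IP η' τ := by
  unfold IP; simp [Matrix.add_apply, add_mul, Finset.sum_add_distrib]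

lemma IP_add_right (η τ τ' : Matrix (Fin n) (Fin n) ℂ) :
    IP η (τ + τ') = IP η τ + IP η τ' := by
  unfold IP; simp [Matrix.add_apply, mul_add, Finset.sum_add_distrib]

lemma IP_smul_left (z : ℂ) (η τ : Matrix (Fin n) (Fin n) ℂ) :
    IP (z • η) τ = z * IP η τ := by
  unfold IP
  simp only [Matrix.smul_apply, smul_eq_mul, Finset.mul_sum]
  exact Finset.sum_congr rfl fun a _ => Finset.sum_congr rfl fun b _ => by ring

lemma IP_smul_right (z : ℂ) (η τ : Matrix (Fin n) (Fin n) ℂ) :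
    IP η (z • τ) = z * IP η τ := by
  unfold IP
  simp only [Matrix.smul_apply, smul_eq_mul, Finset.mul_sum]
  exact Finset.sum_congr rfl fun a _ => Finset.sum_congr rfl fun b _ => by ring

lemma IP_sub_left (η η' τ : Matrix (Fin n) (Fin n) ℂ) :
    IP (η - η') τ = IP η τ - IP η' τ := by
  have : η - η' = η + (-1 : ℂ) • η' := by ext a b; simp [Matrix.sub_apply]; ring
  rw [this, IP_add_left, IP_smul_left]; ring

lemma IP_sub_right (η τ τ' : Matrix (Fin n) (Fin n) ℂ) :
    IP η (τ - τ') = IP η τ - IP η τ' := by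
  have : τ - τ' = τ + (-1 : ℂ) • τ' := by ext a b; simp [Matrix.sub_apply]; ring
  rw [this, IP_add_right, IP_smul_right]; ring

lemma IP_Mm_left (a b : Fin n) (τ : Matrix (Fin n) (Fin n) ℂ) :
    IP (Mm a b) τ = τ b a := by
  unfold IP Mm
  simp [Finset.sum_ite_eq, Finset.sum_ite_eq', ite_and, mul_ite, ite_mul]

lemma IP_Mm (a b c d : Fin n) :
    IP (Mm a b) (Mm c d) = if a = d ∧ b = c then 1 else 0 := by
  rw [IP_Mm_left]
  unfold Mm
  rcases eq_or_ne a d with h|h <;> rcases eq_or_ne b c with h2|h2 <;> simp [h, h2, eq_comm]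

/-- real smul commutes -/
lemma IP_smul_real_left (r : ℝ) (η τ : Matrix (Fin n) (Fin n) ℂ) :
    IP (r • η) τ = (r : ℂ) * IP η τ := by
  have : (r • η) = (r : ℂ) • η := by ext a b; simp [Matrix.smul_apply, Complex.real_smul]
  rw [this, IP_smul_left]

lemma CB_smul_real_left (R : Fin n → Fin n → Fin n → Fin n → ℂ) (r : ℝ)
    (η τ : Matrix (Fin n) (Fin n) ℂ) : CB R (r • η) τ = (r : ℂ) * CB R η τ := by
  have : (r • η) = (r : ℂ) • η := by ext a b; simp [Matrix.smul_apply, Complex.real_smul]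
  rw [this, CB_smul_left]

/-- Hermitian building blocks -/
noncomputable def Smat (a b : Fin n) : Matrix (Fin n) (Fin n) ℂ := Mm a b + Mm b a
noncomputable def Amat (a b : Fin n) : Matrix (Fin n) (Fin n) ℂ := Complex.I • (Mm a b - Mm b a)
noncomputable def Dmat (a b : Fin n) : Matrix (Fin n) (Fin n) ℂ := Mm a a - Mm b b

lemma trace_Mm (a b : Fin n) : (Mm a b).trace = if a = b then 1 else 0 := by
  unfold Matrix.trace Mm
  rcases eq_or_ne a b with h|h <;> simp [Matrix.diag, h, Finset.sum_ite_eq, ite_and, eq_comm]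

lemma memH0_Smat {a b : Fin n} (h : a ≠ b) : MemH0 (Smat a b) := by
  constructor
  · ext x y
    simp [Smat, Mm, Matrix.conjTranspose_apply, Matrix.add_apply, apply_ite (starRingEnd ℂ)]
    rcases eq_or_ne x a <;> rcases eq_or_ne y b <;> rcases eq_or_ne x b <;> rcases eq_or_ne y a <;>
      simp_all <;> ring
  · simp [Smat, Matrix.trace_add, trace_Mm, h, h.symm]

lemma memH0_Amat {a b : Fin n} (h : a ≠ b) : MemH0 (Amat a b) := by
  constructor
  · ext x y
    simp [Amat, Mm, Matrix.conjTranspose_apply, Matrix.smul_apply, Matrix.sub_apply,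
      apply_ite (starRingEnd ℂ), smul_eq_mul]
    rcases eq_or_ne x a <;> rcases eq_or_ne y b <;> rcases eq_or_ne x b <;> rcases eq_or_ne y a <;>
      simp_all <;> ring
  · simp [Amat, Matrix.trace_smul, Matrix.trace_sub, trace_Mm, h, h.symm]

lemma memH0_Dmat {a b : Fin n} (h : a ≠ b) : MemH0 (Dmat a b) := by
  constructor
  · ext x y
    simp [Dmat, Mm, Matrix.conjTranspose_apply, Matrix.sub_apply, apply_ite (starRingEnd ℂ)]
    rcases eq_or_ne x a <;> rcases eq_or_ne y b <;> rcases eq_or_ne x b <;> rcases eq_or_ne y a <;>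
      simp_all
  · simp [Dmat, Matrix.trace_sub, trace_Mm]

lemma memH0_add {η τ : Matrix (Fin n) (Fin n) ℂ} (h1 : MemH0 η) (h2 : MemH0 τ) : MemH0 (η + τ) := by
  exact ⟨Matrix.IsHermitian.add h1.1 h2.1, by rw [Matrix.trace_add, h1.2, h2.2, add_zero]⟩

lemma memH0_sub {η τ : Matrix (Fin n) (Fin n) ℂ} (h1 : MemH0 η) (h2 : MemH0 τ) : MemH0 (η - τ) := by
  exact ⟨Matrix.IsHermitian.sub h1.1 h2.1, by rw [Matrix.trace_sub, h1.2, h2.2, sub_zero]⟩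

lemma memH0_smul_real {η : Matrix (Fin n) (Fin n) ℂ} (r : ℝ) (h : MemH0 η) : MemH0 (r • η) := by
  constructor
  · ext x y
    have := congrFun (congrFun h.1 x) y
    simp only [Matrix.conjTranspose_apply] at this ⊢
    simp only [Matrix.smul_apply, star_smul, star_trivial, this]
  · rw [Matrix.trace_smul, h.2, smul_zero]

end KCT

namespace KCT
variable {n : ℕ}

lemma IP_smul_real_right (r : ℝ) (η τ : Matrix (Fin n) (Fin n) ℂ) :
    IP η (r • τ) = (r : ℂ) * IP η τ := by
  have : (r • τ) = (r : ℂ) • τ := by ext a b; simp [Matrix.smul_apply, Complex.real_smul]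
  rw [this, IP_smul_right]

lemma CB_smul_real_right (R : Fin n → Fin n → Fin n → Fin n → ℂ) (r : ℝ)
    (η τ : Matrix (Fin n) (Fin n) ℂ) : CB R η (r • τ) = (r : ℂ) * CB R η τ := by
  have : (r • τ) = (r : ℂ) • τ := by ext a b; simp [Matrix.smul_apply, Complex.real_smul]
  rw [this, CB_smul_right]

/-- left/right linear packagings for sums -/
noncomputable def IPl (τ : Matrix (Fin n) (Fin n) ℂ) : Matrix (Fin n) (Fin n) ℂ →ₗ[ℂ] ℂ where
  toFun η := IP η τ
  map_add' η η' := IP_add_left η η' τ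
  map_smul' z η := IP_smul_left z η τ

noncomputable def CBr (R : Fin n → Fin n → Fin n → Fin n → ℂ) (η : Matrix (Fin n) (Fin n) ℂ) :
    Matrix (Fin n) (Fin n) ℂ →ₗ[ℂ] ℂ where
  toFun τ := CB R η τ
  map_add' τ τ' := CB_add_right R η τ τ'
  map_smul' z τ := CB_smul_right R z η τ

lemma IP_sum_left {ι : Type*} (s : Finset ι) (f : ι → Matrix (Fin n) (Fin n) ℂ)
    (τ : Matrix (Fin n) (Fin n) ℂ) : IP (∑ k ∈ s, f k) τ = ∑ k ∈ s, IP (f k) τ :=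
  map_sum (IPl τ) f s

lemma CB_sum_right {ι : Type*} (R : Fin n → Fin n → Fin n → Fin n → ℂ)
    (η : Matrix (Fin n) (Fin n) ℂ) (s : Finset ι) (f : ι → Matrix (Fin n) (Fin n) ℂ) :
    CB R η (∑ k ∈ s, f k) = ∑ k ∈ s, CB R η (f k) :=
  map_sum (CBr R η) f s

lemma herm_Smat (a b : Fin n) : (Smat a b).IsHermitian := by
  ext x y
  simp [Smat, Mm, Matrix.conjTranspose_apply, Matrix.add_apply, apply_ite (starRingEnd ℂ)]
  rcases eq_or_ne x a <;> rcases eq_or_ne y b <;> rcases eq_or_ne x b <;> rcases eq_or_ne y a <;>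
    simp_all <;> ring

lemma herm_Amat (a b : Fin n) : (Amat a b).IsHermitian := by
  ext x y
  simp [Amat, Mm, Matrix.conjTranspose_apply, Matrix.smul_apply, Matrix.sub_apply,
    apply_ite (starRingEnd ℂ), smul_eq_mul]
  rcases eq_or_ne x a <;> rcases eq_or_ne y b <;> rcases eq_or_ne x b <;> rcases eq_or_ne y a <;>
    simp_all <;> ring

lemma Id_apply (x y : Fin n) : (∑ k : Fin n, Mm k k) x y = if x = y then 1 else 0 := by
  simp only [Matrix.sum_apply, Mm, Matrix.of_apply]
  rcases eq_or_ne x y with h|h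
  · subst h; simp [ite_and, Finset.sum_ite_eq, eq_comm]
  · rw [Finset.sum_congr rfl (g := fun k => (0:ℂ)) (fun k _ =>
      if_neg (by rintro ⟨h1, h2⟩; exact h (h1.trans h2.symm)))]
    simp [h]

lemma herm_Id : (∑ k : Fin n, Mm k k).IsHermitian := by
  ext x y
  rw [Matrix.conjTranspose_apply, Id_apply, Id_apply]
  rcases eq_or_ne x y with h|h
  · simp [h]
  · rw [if_neg h, if_neg (fun hc => h hc.symm)]
    simp

noncomputable def Btilde (R : Fin n → Fin n → Fin n → Fin n → ℂ) :
    Esp n →ₗ[ℝ] Esp n →ₗ[ℝ] ℝ :=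
  LinearMap.mk₂ ℝ (fun c d => curvForm R (Phi c) (Phi d))
    (fun m₁ m₂ nn => by simp [curvForm_eq_CB, Phi_add, CB_add_left, Complex.add_re])
    (fun r m nn => by
      show curvForm R (Phi (r • m)) (Phi nn) = r • curvForm R (Phi m) (Phi nn)
      rw [curvForm_eq_CB, curvForm_eq_CB, Phi_smul, CB_smul_left, Complex.re_ofReal_mul,
        smul_eq_mul])
    (fun m n₁ n₂ => by simp [curvForm_eq_CB, Phi_add, CB_add_right, Complex.add_re])
    (fun r m nn => by
      show curvForm R (Phi m) (Phi (r • nn)) = r • curvForm R (Phi m) (Phi nn)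
      rw [curvForm_eq_CB, curvForm_eq_CB, Phi_smul, CB_smul_right, Complex.re_ofReal_mul,
        smul_eq_mul])

lemma Btilde_apply (R : Fin n → Fin n → Fin n → Fin n → ℂ) (c d : Esp n) :
    Btilde R c d = curvForm R (Phi c) (Phi d) := rfl

lemma Phi_single_zero (a b : Fin n) :
    Phi (EuclideanSpace.single ((a,b,0) : Fin n × Fin n × Fin 2) (1:ℝ)) = Mm a b := by
  ext x y
  rw [Phi_apply]
  rw [EuclideanSpace.single_apply, EuclideanSpace.single_apply]
  simp only [Prod.mk.injEq, Mm, Matrix.of_apply]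
  have h10 : ((1 : Fin 2) = 0) = False := by simp [Fin.ext_iff]
  simp [h10, ite_and]
  rcases eq_or_ne x a with h|h <;> rcases eq_or_ne y b with h2|h2 <;> simp [h, h2]

lemma Phi_single_one (a b : Fin n) :
    Phi (EuclideanSpace.single ((a,b,1) : Fin n × Fin n × Fin 2) (1:ℝ)) = Complex.I • Mm a b := by
  ext x y
  rw [Phi_apply]
  rw [EuclideanSpace.single_apply, EuclideanSpace.single_apply]
  simp only [Prod.mk.injEq, Mm, Matrix.of_apply, Matrix.smul_apply, smul_eq_mul]
  have h01 : ((0 : Fin 2) = 1) = False := by simp [Fin.ext_iff]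
  simp [h01, ite_and]
  rcases eq_or_ne x a with h|h <;> rcases eq_or_ne y b with h2|h2 <;> simp [h, h2]

end KCT

namespace KCT
variable {n : ℕ}


noncomputable def Pmat (n : ℕ) : Fin n × Fin n × Fin 2 → Matrix (Fin n) (Fin n) ℂ := fun q =>
  if q.2.2 = 0 then
    (2⁻¹ : ℝ) • Smat q.1 q.2.1 -
      (if q.1 = q.2.1 then ((n:ℝ)⁻¹) • ∑ k, Mm k k else 0)
  else (2⁻¹ : ℝ) • Amat q.1 q.2.1

lemma trace_Smat (a b : Fin n) : (Smat a b).trace = if a = b then 2 else 0 := by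
  rw [Smat, Matrix.trace_add, trace_Mm, trace_Mm]
  rcases eq_or_ne a b with h|h
  · simp [h]; norm_num
  · simp [h, (Ne.symm h : b ≠ a)]

lemma trace_Amat (a b : Fin n) : (Amat a b).trace = 0 := by
  rw [Amat, Matrix.trace_smul, Matrix.trace_sub, trace_Mm, trace_Mm]
  rcases eq_or_ne a b with h|h
  · simp [h]
  · simp [h, (Ne.symm h : b ≠ a)]

lemma trace_Id : (∑ k : Fin n, Mm k k).trace = (n : ℂ) := by
  rw [Matrix.trace_sum]
  rw [Finset.sum_congr rfl (fun k _ => trace_Mm k k)]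
  simp

lemma memH0_Pmat (hn : 0 < n) (q : Fin n × Fin n × Fin 2) : MemH0 (Pmat n q) := by
  obtain ⟨a, b, ε⟩ := q
  have hherm_smul : ∀ (r : ℝ) (η : Matrix (Fin n) (Fin n) ℂ),
      η.IsHermitian → (r • η).IsHermitian := by
    intro r η hη
    ext x y
    have := congrFun (congrFun hη x) y
    simp only [Matrix.conjTranspose_apply] at this ⊢
    simp only [Matrix.smul_apply, star_smul, star_trivial, this]
  have hsub : ∀ (η τ : Matrix (Fin n) (Fin n) ℂ),
      η.IsHermitian → τ.IsHermitian → (η - τ).IsHermitian := fun _ _ h1 h2 => h1.sub h2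
  fin_cases ε
  · constructor
    · show ((2⁻¹ : ℝ) • Smat a b - _).IsHermitian
      apply hsub _ _ (hherm_smul _ _ (herm_Smat a b))
      rcases eq_or_ne a b with h|h
      · rw [if_pos h]; exact hherm_smul _ _ herm_Id
      · rw [if_neg h]; exact Matrix.isHermitian_zero
    · show ((2⁻¹ : ℝ) • Smat a b - _).trace = 0
      rw [Matrix.trace_sub, Matrix.trace_smul, trace_Smat]
      rcases eq_or_ne a b with h|h
      · rw [if_pos h, if_pos h, Matrix.trace_smul, trace_Id]
        have : (n:ℂ) ≠ 0 := by exact_mod_cast Nat.cast_ne_zero.mpr hn.ne'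
        rw [Complex.real_smul, Complex.real_smul]
        push_cast
        rw [inv_mul_cancel₀ two_ne_zero, inv_mul_cancel₀ this, sub_self]
      · rw [if_neg h, if_neg h]
        simp
  · constructor
    · show ((2⁻¹ : ℝ) • Amat a b).IsHermitian
      exact hherm_smul _ _ (herm_Amat a b)
    · show ((2⁻¹ : ℝ) • Amat a b).trace = 0
      rw [Matrix.trace_smul, trace_Amat, smul_zero]

noncomputable def pvec (n : ℕ) : Fin n × Fin n × Fin 2 → Esp n := fun q => iota (Pmat n q)

lemma pvec_mem (hn : 0 < n) (q : Fin n × Fin n × Fin 2) : pvec n q ∈ Wsub n :=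
  iota_mem (memH0_Pmat hn q)

lemma pvec_perp (hn : 0 < n) (q : Fin n × Fin n × Fin 2) :
    ∀ w ∈ Wsub n, ⟪(EuclideanSpace.single q (1:ℝ)) - pvec n q, w⟫ = 0 := by
  intro w hw
  obtain ⟨h1, h2, h3⟩ := hw
  rw [inner_sub_left]
  have hsingle : ⟪(EuclideanSpace.single q (1:ℝ)), w⟫ = w q := by
    rw [EuclideanSpace.inner_single_left]; simp
  have hPhiw_re : ∀ x y, (Phi w x y).re = w (x,y,0) := by intro x y; simp [Phi_apply]
  have hPhiw_im : ∀ x y, (Phi w x y).im = w (x,y,1) := by intro x y; simp [Phi_apply]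
  have hp : ⟪pvec n q, w⟫ = (IP (Pmat n q) (Phi w)).re := by
    rw [pvec, inner_eq_h0Inner _ w ⟨h1, h2, h3⟩, Phi_iota, h0Inner_eq_IP]
  rw [hsingle, hp]
  obtain ⟨a, b, ε⟩ := q
  fin_cases ε
  · show w (a,b,0) - (IP (Pmat n (a,b,0)) (Phi w)).re = 0
    have : Pmat n (a,b,0) = (2⁻¹ : ℝ) • Smat a b -
        (if a = b then ((n:ℝ)⁻¹) • ∑ k, Mm k k else 0) := rfl
    rw [this, IP_sub_left, IP_smul_real_left]
    have hS : IP (Smat a b) (Phi w) = Phi w b a + Phi w a b := by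
      rw [Smat, IP_add_left, IP_Mm_left, IP_Mm_left]
    have hite : (IP (if a = b then ((n:ℝ)⁻¹) • ∑ k, Mm k k else 0) (Phi w)).re = 0 := by
      rcases eq_or_ne a b with h|h
      · rw [if_pos h, IP_smul_real_left, IP_sum_left]
        rw [Finset.sum_congr rfl (fun k _ => IP_Mm_left k k (Phi w))]
        rw [Complex.re_ofReal_mul, Complex.re_sum]
        rw [Finset.sum_congr rfl (fun k _ => hPhiw_re k k), h3, mul_zero]
      · rw [if_neg h]
        have : IP (0 : Matrix (Fin n) (Fin n) ℂ) (Phi w) = 0 := by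
          unfold IP; simp [Matrix.zero_apply]
        rw [this]; simp
    rw [Complex.sub_re, hite, sub_zero, Complex.re_ofReal_mul, hS, Complex.add_re,
      hPhiw_re, hPhiw_re, h1 a b]
    ring
  · show w (a,b,1) - (IP (Pmat n (a,b,1)) (Phi w)).re = 0
    have : Pmat n (a,b,1) = (2⁻¹ : ℝ) • Amat a b := rfl
    rw [this, IP_smul_real_left]
    have hA : IP (Amat a b) (Phi w) = Complex.I * (Phi w b a - Phi w a b) := by
      rw [Amat, IP_smul_left, IP_sub_left, IP_Mm_left, IP_Mm_left]
    rw [Complex.re_ofReal_mul, hA]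
    rw [show (Complex.I * (Phi w b a - Phi w a b)).re = -((Phi w b a - Phi w a b)).im by
      simp [Complex.mul_re]]
    rw [Complex.sub_im, hPhiw_im, hPhiw_im, h2 a b]
    ring

end KCT



-- abstract trace-projection lemma
lemma traceProj {G : Type*} [NormedAddCommGroup G] [InnerProductSpace ℝ G]
    {ι : Type*} [Fintype ι] [DecidableEq ι]
    (W : Submodule ℝ G) {N : ℕ} (b : OrthonormalBasis (Fin N) ℝ ↥W)
    (e : OrthonormalBasis ι ℝ G) (B : G →ₗ[ℝ] G →ₗ[ℝ] ℝ)
    (p : ι → G) (hp1 : ∀ j, p j ∈ W) (hp2 : ∀ j, ∀ w ∈ W, ⟪(e j : G) - p j, w⟫ = 0) :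
    ∑ i, B (b i : G) (b i : G) = ∑ j, B (e j) (p j) := by
  have key : ∀ j : ι, (∑ i, (⟪e j, (b i : G)⟫) • (b i : G)) = p j := by
    intro j
    have h1 : ∀ i : Fin N, ⟪e j, (b i : G)⟫ = ⟪p j, (b i : G)⟫ := by
      intro i
      have := hp2 j (b i : G) (b i).2
      rw [inner_sub_left] at this
      linarith
    rw [Finset.sum_congr rfl (fun i _ => by rw [h1 i])]
    have hrepr := b.sum_repr' (⟨p j, hp1 j⟩ : ↥W)
    have := congrArg (Submodule.subtype W) hrepr
    rw [map_sum] at this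
    simp only [Submodule.subtype_apply] at this
    conv_rhs => rw [← this]
    refine Finset.sum_congr rfl fun i _ => ?_
    have hci : (inner ℝ (b i) (⟨p j, hp1 j⟩ : ↥W) : ℝ) = ⟪(b i : G), p j⟫ :=
      Submodule.coe_inner W _ _
    rw [Submodule.coe_smul, hci]
    rw [real_inner_comm]
  have hexp : ∀ x y : G, B x y = ∑ j, ⟪e j, x⟫ * B (e j) y := by
    intro x y
    conv_lhs => rw [← e.sum_repr' x]
    rw [map_sum, LinearMap.sum_apply]
    refine Finset.sum_congr rfl fun j _ => ?_
    rw [map_smul, LinearMap.smul_apply, smul_eq_mul]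
  calc ∑ i, B (b i : G) (b i : G)
      = ∑ i, ∑ j, ⟪e j, (b i : G)⟫ * B (e j) (b i : G) :=
        Finset.sum_congr rfl fun i _ => hexp _ _
    _ = ∑ j, ∑ i, ⟪e j, (b i : G)⟫ * B (e j) (b i : G) := Finset.sum_comm
    _ = ∑ j, B (e j) (p j) := by
        refine Finset.sum_congr rfl fun j _ => ?_
        rw [← key j, map_sum]
        refine Finset.sum_congr rfl fun i _ => ?_
        rw [map_smul, smul_eq_mul]

namespace KCT
variable {n : ℕ}

lemma CB_zero_right (R : Fin n → Fin n → Fin n → Fin n → ℂ) (η : Matrix (Fin n) (Fin n) ℂ) :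
    CB R η 0 = 0 := map_zero (CBr R η)

lemma trace_sum (hn : 3 ≤ n) (R : Fin n → Fin n → Fin n → Fin n → ℂ)
    (hR1 : ∀ i j k l, R i j k l = R k j i l) {N : ℕ}
    (b : OrthonormalBasis (Fin N) ℝ ↥(Wsub n)) :
    ∑ i, Btilde R (b i : Esp n) (b i : Esp n) = (1 - (n:ℝ)⁻¹) * scalarCurv R := by
  have hpos : 0 < n := by omega
  have hperp : ∀ j, ∀ w ∈ Wsub n,
      ⟪((EuclideanSpace.basisFun (Fin n × Fin n × Fin 2) ℝ) j : Esp n) - pvec n j, w⟫ = 0 := by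
    intro j w hw
    rw [EuclideanSpace.basisFun_apply]
    exact pvec_perp hpos j w hw
  rw [traceProj (Wsub n) b (EuclideanSpace.basisFun _ ℝ) (Btilde R) (pvec n)
    (pvec_mem hpos) hperp]
  have hterm : ∀ a c : Fin n,
      Btilde R ((EuclideanSpace.basisFun (Fin n × Fin n × Fin 2) ℝ) (a,c,0)) (pvec n (a,c,0)) +
      Btilde R ((EuclideanSpace.basisFun (Fin n × Fin n × Fin 2) ℝ) (a,c,1)) (pvec n (a,c,1))
      = (R c a a c).re - (if a = c then (n:ℝ)⁻¹ * (ricci R a a).re else 0) := by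
    intro a c
    rw [EuclideanSpace.basisFun_apply, EuclideanSpace.basisFun_apply]
    rw [Btilde_apply, Btilde_apply, pvec, pvec, Phi_iota, Phi_iota,
      Phi_single_zero, Phi_single_one]
    have hP0 : Pmat n (a,c,0) = (2⁻¹ : ℝ) • Smat a c -
        (if a = c then ((n:ℝ)⁻¹) • ∑ k, Mm k k else 0) := rfl
    have hP1 : Pmat n (a,c,1) = (2⁻¹ : ℝ) • Amat a c := rfl
    rw [curvForm_eq_CB, curvForm_eq_CB, hP0, hP1]
    rw [CB_sub_right, CB_smul_real_right]
    have hS : CB R (Mm a c) (Smat a c) = R c a c a + R c a a c := by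
      rw [Smat, CB_add_right, CB_Mm, CB_Mm]
    have hite : CB R (Mm a c) (if a = c then ((n:ℝ)⁻¹) • ∑ k, Mm k k else 0)
        = if a = c then Complex.ofReal ((n:ℝ)⁻¹) * (ricci R c a) else 0 := by
      rcases eq_or_ne a c with h|h
      · rw [if_pos h, if_pos h, CB_smul_real_right, CB_sum_right]
        rw [Finset.sum_congr rfl (fun k _ => CB_Mm R a c k k)]
        rw [ricci]
      · rw [if_neg h, if_neg h, CB_zero_right]
    have hA : CB R (Complex.I • Mm a c) ((2⁻¹ : ℝ) • Amat a c)
        = Complex.I * (((2⁻¹ : ℝ) : ℂ) * (Complex.I * (R c a c a - R c a a c))) := by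
      rw [CB_smul_left, CB_smul_real_right, Amat, CB_smul_right, CB_sub_right, CB_Mm, CB_Mm]
    rw [hS, hite, hA]
    rcases eq_or_ne a c with h|h
    · subst h
      rw [if_pos rfl, if_pos rfl]
      simp only [Complex.sub_re, Complex.add_re, Complex.mul_re, Complex.mul_im,
        Complex.I_re, Complex.I_im, Complex.ofReal_re, Complex.ofReal_im]
      ring
    · rw [if_neg h, if_neg h]
      simp only [sub_zero, Complex.add_re, Complex.sub_re, Complex.mul_re, Complex.mul_im,
        Complex.I_re, Complex.I_im, Complex.ofReal_re, Complex.ofReal_im]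
      ring
  rw [Fintype.sum_prod_type]
  rw [Finset.sum_congr rfl (fun a _ => Fintype.sum_prod_type _)]
  rw [Finset.sum_congr rfl (fun a _ => Finset.sum_congr rfl (fun c _ => Fin.sum_univ_two _))]
  rw [Finset.sum_congr rfl (fun a _ => Finset.sum_congr rfl (fun c _ => hterm a c))]
  rw [Finset.sum_congr rfl (fun a _ => Finset.sum_sub_distrib _ _)]
  rw [Finset.sum_sub_distrib]
  have h1 : ∑ a : Fin n, ∑ c : Fin n, (R c a a c).re = scalarCurv R := by
    unfold scalarCurv ricci
    refine Finset.sum_congr rfl fun a _ => ?_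
    rw [Complex.re_sum]
    refine Finset.sum_congr rfl fun c _ => ?_
    rw [hR1 c a a c]
  have h2 : ∑ a : Fin n, ∑ c : Fin n, (if a = c then (n:ℝ)⁻¹ * (ricci R a a).re else 0)
      = (n:ℝ)⁻¹ * scalarCurv R := by
    rw [Finset.sum_congr rfl (fun a _ => Finset.sum_ite_eq Finset.univ a
      (fun _ => (n:ℝ)⁻¹ * (ricci R a a).re))]
    simp only [Finset.mem_univ, if_pos]
    rw [scalarCurv, Finset.mul_sum]
  rw [h1, h2]
  ring

end KCT

namespace KCT
variable {n : ℕ}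

lemma IP_SS {a b : Fin n} (h : a ≠ b) : IP (Smat a b) (Smat a b) = 2 := by
  rw [Smat, IP_add_left, IP_add_right, IP_add_right, IP_Mm, IP_Mm, IP_Mm, IP_Mm]
  simp [h, h.symm]
  norm_num

lemma IP_AA {a b : Fin n} (h : a ≠ b) : IP (Amat a b) (Amat a b) = 2 := by
  rw [Amat, IP_smul_left, IP_smul_right, IP_sub_left, IP_sub_right, IP_sub_right,
    IP_Mm, IP_Mm, IP_Mm, IP_Mm]
  simp [h, h.symm]
  rw [show (Complex.I * (Complex.I * (-1 - 1)) : ℂ) = 2 by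
    rw [← mul_assoc, Complex.I_mul_I]; ring]

lemma IP_DD {a b : Fin n} (h : a ≠ b) : IP (Dmat a b) (Dmat a b) = 2 := by
  rw [Dmat, IP_sub_left, IP_sub_right, IP_sub_right, IP_Mm, IP_Mm, IP_Mm, IP_Mm]
  simp [h, h.symm]
  ring

lemma ip_SS {a b : Fin n} (h : a ≠ b) : h0Inner (Smat a b) (Smat a b) = 2 := by
  rw [h0Inner_eq_IP, IP_SS h]; simp
lemma ip_AA {a b : Fin n} (h : a ≠ b) : h0Inner (Amat a b) (Amat a b) = 2 := by
  rw [h0Inner_eq_IP, IP_AA h]; simp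
lemma ip_DD {a b : Fin n} (h : a ≠ b) : h0Inner (Dmat a b) (Dmat a b) = 2 := by
  rw [h0Inner_eq_IP, IP_DD h]; simp

lemma IP_SA {a b : Fin n} (h : a ≠ b) : IP (Smat a b) (Amat a b) = 0 := by
  rw [Smat, Amat, IP_smul_right, IP_add_left, IP_sub_right, IP_sub_right,
    IP_Mm, IP_Mm, IP_Mm, IP_Mm]
  simp [h, h.symm]

lemma rank_ge_three (hn : 3 ≤ n) : 3 ≤ finrank ℝ ↥(Wsub n) := by
  set i0 : Fin n := ⟨0, by omega⟩ with hi0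
  set i1 : Fin n := ⟨1, by omega⟩ with hi1
  set i2 : Fin n := ⟨2, by omega⟩ with hi2
  have h01 : i0 ≠ i1 := by simp [hi0, hi1, Fin.ext_iff]
  have h02 : i0 ≠ i2 := by simp [hi0, hi2, Fin.ext_iff]
  have h12 : i1 ≠ i2 := by simp [hi1, hi2, Fin.ext_iff]
  set r : ℝ := (Real.sqrt 2)⁻¹ with hr
  have hrr : r * r * 2 = 1 := by
    rw [hr, ← mul_inv]
    rw [show Real.sqrt 2 * Real.sqrt 2 = 2 from Real.mul_self_sqrt (by norm_num)]
    norm_num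
  set η : Fin 3 → Matrix (Fin n) (Fin n) ℂ :=
    ![r • Smat i0 i1, r • Amat i0 i1, r • Smat i0 i2] with hη
  have hmem : ∀ t, MemH0 (η t) := by
    intro t
    fin_cases t
    · exact memH0_smul_real r (memH0_Smat h01)
    · exact memH0_smul_real r (memH0_Amat h01)
    · exact memH0_smul_real r (memH0_Smat h02)
  set w : Fin 3 → ↥(Wsub n) := fun t => ⟨iota (η t), iota_mem (hmem t)⟩ with hw
  have hinner : ∀ s t, (inner ℝ (w s) (w t) : ℝ) = h0Inner (η s) (η t) := by
    intro s t
    rw [Submodule.coe_inner]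
    show (inner ℝ (iota (η s)) (iota (η t)) : ℝ) = _
    rw [inner_eq_h0Inner _ _ (iota_mem (hmem t)), Phi_iota, Phi_iota]
  have horth : Orthonormal ℝ w := by
    rw [orthonormal_iff_ite]
    intro s t
    rw [hinner s t]
    have hexp : ∀ X Y : Matrix (Fin n) (Fin n) ℂ,
        h0Inner (r • X) (r • Y) = ((r:ℂ) * ((r:ℂ) * IP X Y)).re := by
      intro X Y
      rw [h0Inner_eq_IP, IP_smul_real_left, IP_smul_real_right]
    fin_cases s <;> fin_cases t
    · show h0Inner (r • Smat i0 i1) (r • Smat i0 i1) = _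
      rw [hexp, IP_SS h01]
      simp only [if_pos rfl]
      rw [show ((r:ℂ) * ((r:ℂ)*2)).re = r * r * 2 by push_cast; simp [Complex.mul_re]; ring, hrr]
      simp
    · show h0Inner (r • Smat i0 i1) (r • Amat i0 i1) = _
      rw [hexp, IP_SA h01]; simp
    · show h0Inner (r • Smat i0 i1) (r • Smat i0 i2) = _
      rw [hexp, show IP (Smat i0 i1) (Smat i0 i2) = 0 by
        rw [Smat, Smat, IP_add_left, IP_add_right, IP_add_right, IP_Mm, IP_Mm, IP_Mm, IP_Mm]
        simp [h01, h02, h12, h01.symm, h02.symm, h12.symm]]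
      simp
    · show h0Inner (r • Amat i0 i1) (r • Smat i0 i1) = _
      rw [hexp, show IP (Amat i0 i1) (Smat i0 i1) = 0 by
        rw [Smat, Amat, IP_smul_left, IP_add_right, IP_sub_left, IP_sub_left,
          IP_Mm, IP_Mm, IP_Mm, IP_Mm]
        simp [h01, h01.symm]]
      simp
    · show h0Inner (r • Amat i0 i1) (r • Amat i0 i1) = _
      rw [hexp, IP_AA h01]
      simp only [if_pos rfl]
      rw [show ((r:ℂ) * ((r:ℂ)*2)).re = r * r * 2 by push_cast; simp [Complex.mul_re]; ring, hrr]
      simp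
    · show h0Inner (r • Amat i0 i1) (r • Smat i0 i2) = _
      rw [hexp, show IP (Amat i0 i1) (Smat i0 i2) = 0 by
        rw [Smat, Amat, IP_smul_left, IP_add_right, IP_sub_left, IP_sub_left,
          IP_Mm, IP_Mm, IP_Mm, IP_Mm]
        simp [h01, h02, h12, h01.symm, h02.symm, h12.symm]]
      simp
    · show h0Inner (r • Smat i0 i2) (r • Smat i0 i1) = _
      rw [hexp, show IP (Smat i0 i2) (Smat i0 i1) = 0 by
        rw [Smat, Smat, IP_add_left, IP_add_right, IP_add_right, IP_Mm, IP_Mm, IP_Mm, IP_Mm]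
        simp [h01, h02, h12, h01.symm, h02.symm, h12.symm]]
      simp
    · show h0Inner (r • Smat i0 i2) (r • Amat i0 i1) = _
      rw [hexp, show IP (Smat i0 i2) (Amat i0 i1) = 0 by
        rw [Smat, Amat, IP_smul_right, IP_add_left, IP_sub_right, IP_sub_right,
          IP_Mm, IP_Mm, IP_Mm, IP_Mm]
        simp [h01, h02, h12, h01.symm, h02.symm, h12.symm]]
      simp
    · show h0Inner (r • Smat i0 i2) (r • Smat i0 i2) = _
      rw [hexp, IP_SS h02]
      simp only [if_pos rfl]
      rw [show ((r:ℂ) * ((r:ℂ)*2)).re = r * r * 2 by push_cast; simp [Complex.mul_re]; ring, hrr]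
      simp
  have := horth.linearIndependent.fintype_card_le_finrank
  simpa using this

end KCT

namespace KCT
variable {n : ℕ}

lemma sum4_swap (f : Fin n → Fin n → Fin n → Fin n → ℂ) :
    ∑ i, ∑ j, ∑ k, ∑ l, f i j k l = ∑ k, ∑ l, ∑ i, ∑ j, f i j k l := by
  rw [Finset.sum_congr rfl (fun i _ => Finset.sum_comm)]
  rw [Finset.sum_comm]
  rw [Finset.sum_congr rfl (fun k _ => Finset.sum_congr rfl (fun i _ => Finset.sum_comm))]
  rw [Finset.sum_congr rfl (fun k _ => Finset.sum_comm)]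

lemma CB_symm (R : Fin n → Fin n → Fin n → Fin n → ℂ)
    (hR1 : ∀ i j k l, R i j k l = R k j i l) (hR2 : ∀ i j k l, R i j k l = R i l k j)
    (η τ : Matrix (Fin n) (Fin n) ℂ) : CB R η τ = CB R τ η := by
  have hswap : ∀ i j k l, R i j k l = R k l i j := fun i j k l => by
    rw [hR1 i j k l, hR2 k j i l]
  unfold CB
  calc ∑ i, ∑ j, ∑ k, ∑ l, R i j k l * η j i * τ l k
      = ∑ i, ∑ j, ∑ k, ∑ l, R k l i j * η j i * τ l k := by
        refine Finset.sum_congr rfl fun i _ => Finset.sum_congr rfl fun j _ =>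
          Finset.sum_congr rfl fun k _ => Finset.sum_congr rfl fun l _ => by rw [← hswap]
    _ = ∑ k, ∑ l, ∑ i, ∑ j, R k l i j * η j i * τ l k := sum4_swap _
    _ = ∑ k, ∑ l, ∑ i, ∑ j, R k l i j * τ l k * η j i := by
        refine Finset.sum_congr rfl fun k _ => Finset.sum_congr rfl fun l _ =>
          Finset.sum_congr rfl fun i _ => Finset.sum_congr rfl fun j _ => by ring

lemma CB_conj (R : Fin n → Fin n → Fin n → Fin n → ℂ)
    (hR3 : ∀ i j k l, starRingEnd ℂ (R i j k l) = R j i l k)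
    {η τ : Matrix (Fin n) (Fin n) ℂ} (hη : η.IsHermitian) (hτ : τ.IsHermitian) :
    starRingEnd ℂ (CB R η τ) = CB R η τ := by
  have hce : ∀ (X : Matrix (Fin n) (Fin n) ℂ), X.IsHermitian →
      ∀ a b, starRingEnd ℂ (X a b) = X b a := by
    intro X hX a b
    have := congrFun (congrFun hX b) a
    rw [Matrix.conjTranspose_apply] at this
    exact this
  unfold CB
  simp only [map_sum, map_mul]
  calc ∑ i, ∑ j, ∑ k, ∑ l,
        starRingEnd ℂ (R i j k l) * starRingEnd ℂ (η j i) * starRingEnd ℂ (τ l k)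
      = ∑ i, ∑ j, ∑ k, ∑ l, R j i l k * η i j * τ k l := by
        refine Finset.sum_congr rfl fun i _ => Finset.sum_congr rfl fun j _ =>
          Finset.sum_congr rfl fun k _ => Finset.sum_congr rfl fun l _ => by
            rw [hR3, hce η hη, hce τ hτ]
    _ = ∑ i, ∑ j, ∑ k, ∑ l, R i j k l * η j i * τ l k := by
        rw [Finset.sum_comm]
        exact Finset.sum_congr rfl fun j _ => Finset.sum_congr rfl fun i _ => Finset.sum_comm

lemma CB_eq_curvForm (R : Fin n → Fin n → Fin n → Fin n → ℂ)
    (hR3 : ∀ i j k l, starRingEnd ℂ (R i j k l) = R j i l k)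
    {η τ : Matrix (Fin n) (Fin n) ℂ} (hη : η.IsHermitian) (hτ : τ.IsHermitian) :
    CB R η τ = ((curvForm R η τ : ℝ) : ℂ) := by
  rw [curvForm_eq_CB]
  exact ((Complex.conj_eq_iff_re).mp (CB_conj R hR3 hη hτ)).symm


lemma quad_bound (hn : 3 ≤ n) (R : Fin n → Fin n → Fin n → Fin n → ℂ)
    (hR1 : ∀ i j k l, R i j k l = R k j i l) (h2 : TwoNonnegTBC R) :
    0 ≤ scalarCurv R ∧ ∀ η, MemH0 η →
      |curvForm R η η| ≤ ((1 - (n:ℝ)⁻¹) * scalarCurv R) * h0Inner η η := by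
  set b := stdOrthonormalBasis ℝ ↥(Wsub n) with hb
  set BW : ↥(Wsub n) →ₗ[ℝ] ↥(Wsub n) →ₗ[ℝ] ℝ :=
    (Btilde R).compl₁₂ (Wsub n).subtype (Wsub n).subtype with hBW
  have hBWapp : ∀ x y : ↥(Wsub n), BW x y = curvForm R (Phi (x : Esp n)) (Phi (y : Esp n)) :=
    fun x y => rfl
  have hipx : ∀ x y : ↥(Wsub n), ⟪x, y⟫ = h0Inner (Phi (x : Esp n)) (Phi (y : Esp n)) := by
    intro x y
    rw [Submodule.coe_inner]
    exact inner_eq_h0Inner _ _ y.2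
  have h2' : ∀ x y : ↥(Wsub n), ‖x‖ = 1 → ‖y‖ = 1 → ⟪x,y⟫ = 0 →
      0 ≤ BW x x + BW y y := by
    intro x y hx hy hxy
    rw [hBWapp, hBWapp]
    apply h2 _ _ (memH0_Phi x.2) (memH0_Phi y.2)
    · rw [← hipx, real_inner_self_eq_norm_sq, hx]; norm_num
    · rw [← hipx, real_inner_self_eq_norm_sq, hy]; norm_num
    · rw [← hipx]; exact hxy
  obtain ⟨hT, hbd⟩ := lemA (rank_ge_three hn) rfl b BW h2'
  have htr : ∑ i, BW (b i) (b i) = (1 - (n:ℝ)⁻¹) * scalarCurv R := trace_sum hn R hR1 b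
  constructor
  · rw [htr] at hT
    have h3 : (3:ℝ) ≤ (n:ℝ) := by exact_mod_cast hn
    have hinv : (n:ℝ)⁻¹ ≤ 3⁻¹ := by
      apply inv_anti₀ <;> norm_num
      linarith
    nlinarith [hT]
  · intro η hη
    have hx := iota_mem hη
    have hb2 := hbd (⟨iota η, hx⟩ : ↥(Wsub n))
    rw [htr] at hb2
    have hBx : BW ⟨iota η, hx⟩ ⟨iota η, hx⟩ = curvForm R η η := by
      rw [hBWapp]
      show curvForm R (Phi (iota η)) (Phi (iota η)) = _
      rw [Phi_iota]
    have hix : ⟪(⟨iota η, hx⟩ : ↥(Wsub n)), (⟨iota η, hx⟩ : ↥(Wsub n))⟫ = h0Inner η η := by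
      rw [hipx]
      show h0Inner (Phi (iota η)) (Phi (iota η)) = _
      rw [Phi_iota]
    rw [hBx, hix] at hb2
    exact hb2

end KCT

namespace KCT
variable {n : ℕ}

lemma exists_third (hn : 3 ≤ n) (a b : Fin n) : ∃ c : Fin n, c ≠ a ∧ c ≠ b := by
  by_contra h
  push_neg at h
  have hsub : (Finset.univ : Finset (Fin n)) ⊆ {a, b} := by
    intro c _
    rcases eq_or_ne c a with h1|h1
    · simp [h1]
    · simp [h c h1]
  have hle := Finset.card_le_card hsub
  have hcard : ({a,b} : Finset (Fin n)).card ≤ 2 := by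
    apply le_trans (Finset.card_insert_le _ _)
    simp
  rw [Finset.card_univ, Fintype.card_fin] at hle
  omega

lemma habs3 (u v w : ℂ) : ‖u + v + w‖ ≤
    ‖u‖ + ‖v‖ + ‖w‖ := by
  calc ‖u + v + w‖ ≤ ‖u + v‖ + ‖w‖ := norm_add_le _ _
    _ ≤ ‖u‖ + ‖v‖ + ‖w‖ := by
        have := norm_add_le u v; linarith

lemma component_bound (hn : 3 ≤ n) (R : Fin n → Fin n → Fin n → Fin n → ℂ)
    (hR : IsKahlerCurvTensor R) (h2 : TwoNonnegTBC R) :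
    0 ≤ scalarCurv R ∧ ∀ i j k l, ‖R i j k l‖ ≤ 9 * scalarCurv R := by
  obtain ⟨hR1, hR2, hR3⟩ := hR
  obtain ⟨hr, hQ⟩ := quad_bound hn R hR1 h2
  set K := (1 - (n:ℝ)⁻¹) * scalarCurv R with hK
  have h3 : (3:ℝ) ≤ (n:ℝ) := by exact_mod_cast hn
  have hinv : 0 ≤ (n:ℝ)⁻¹ := by positivity
  have hinv1 : (n:ℝ)⁻¹ ≤ 1 := by
    rw [inv_le_one_iff₀]
    right; linarith
  have hK0 : 0 ≤ K := by nlinarith [hr]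
  have hKr : K ≤ scalarCurv R := by nlinarith [hr]
  refine ⟨hr, ?_⟩
  -- symmetry
  have hsym : ∀ η τ, curvForm R η τ = curvForm R τ η := fun η τ => by
    rw [curvForm_eq_CB, curvForm_eq_CB, CB_symm R hR1 hR2]
  have hip_sym : ∀ η τ : Matrix (Fin n) (Fin n) ℂ, h0Inner η τ = h0Inner τ η := fun η τ => by
    rw [h0Inner, h0Inner, Matrix.trace_mul_comm]
  have hadd_l : ∀ a b c : Matrix (Fin n) (Fin n) ℂ,
      curvForm R (a+b) c = curvForm R a c + curvForm R b c := fun a b c => by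
    rw [curvForm_eq_CB, curvForm_eq_CB, curvForm_eq_CB, CB_add_left, Complex.add_re]
  have hadd_r : ∀ a b c : Matrix (Fin n) (Fin n) ℂ,
      curvForm R a (b+c) = curvForm R a b + curvForm R a c := fun a b c => by
    rw [curvForm_eq_CB, curvForm_eq_CB, curvForm_eq_CB, CB_add_right, Complex.add_re]
  have hsub_l : ∀ a b c : Matrix (Fin n) (Fin n) ℂ,
      curvForm R (a-b) c = curvForm R a c - curvForm R b c := fun a b c => by
    rw [curvForm_eq_CB, curvForm_eq_CB, curvForm_eq_CB, CB_sub_left, Complex.sub_re]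
  have hsub_r : ∀ a b c : Matrix (Fin n) (Fin n) ℂ,
      curvForm R a (b-c) = curvForm R a b - curvForm R a c := fun a b c => by
    rw [curvForm_eq_CB, curvForm_eq_CB, curvForm_eq_CB, CB_sub_right, Complex.sub_re]
  have hipadd_l : ∀ a b c : Matrix (Fin n) (Fin n) ℂ,
      h0Inner (a+b) c = h0Inner a c + h0Inner b c := fun a b c => by
    rw [h0Inner_eq_IP, h0Inner_eq_IP, h0Inner_eq_IP, IP_add_left, Complex.add_re]
  have hipadd_r : ∀ a b c : Matrix (Fin n) (Fin n) ℂ,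
      h0Inner a (b+c) = h0Inner a b + h0Inner a c := fun a b c => by
    rw [h0Inner_eq_IP, h0Inner_eq_IP, h0Inner_eq_IP, IP_add_right, Complex.add_re]
  have hipsub_l : ∀ a b c : Matrix (Fin n) (Fin n) ℂ,
      h0Inner (a-b) c = h0Inner a c - h0Inner b c := fun a b c => by
    rw [h0Inner_eq_IP, h0Inner_eq_IP, h0Inner_eq_IP, IP_sub_left, Complex.sub_re]
  have hipsub_r : ∀ a b c : Matrix (Fin n) (Fin n) ℂ,
      h0Inner a (b-c) = h0Inner a b - h0Inner a c := fun a b c => by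
    rw [h0Inner_eq_IP, h0Inner_eq_IP, h0Inner_eq_IP, IP_sub_right, Complex.sub_re]
  -- bilinear bound
  have hbil : ∀ η τ, MemH0 η → MemH0 τ →
      |curvForm R η τ| ≤ K * (h0Inner η η + h0Inner τ τ) / 2 := by
    intro η τ hη hτ
    have hplus := hQ (η + τ) (memH0_add hη hτ)
    have hminus := hQ (η - τ) (memH0_sub hη hτ)
    have hexp_p : curvForm R (η+τ) (η+τ)
        = curvForm R η η + 2 * curvForm R η τ + curvForm R τ τ := by
      rw [hadd_l, hadd_r, hadd_r, hsym τ η]; ring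
    have hexp_m : curvForm R (η-τ) (η-τ)
        = curvForm R η η - 2 * curvForm R η τ + curvForm R τ τ := by
      rw [hsub_l, hsub_r, hsub_r, hsym τ η]; ring
    have hip_p : h0Inner (η+τ) (η+τ) = h0Inner η η + 2 * h0Inner η τ + h0Inner τ τ := by
      rw [hipadd_l, hipadd_r, hipadd_r, hip_sym τ η]; ring
    have hip_m : h0Inner (η-τ) (η-τ) = h0Inner η η - 2 * h0Inner η τ + h0Inner τ τ := by
      rw [hipsub_l, hipsub_r, hipsub_r, hip_sym τ η]; ring
    rw [hexp_p, hip_p] at hplus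
    rw [hexp_m, hip_m] at hminus
    rw [abs_le] at hplus hminus ⊢
    obtain ⟨hp1, hp2⟩ := hplus
    obtain ⟨hm1, hm2⟩ := hminus
    constructor <;> nlinarith
  have hCB : ∀ η τ, MemH0 η → MemH0 τ →
      ‖CB R η τ‖ ≤ K * (h0Inner η η + h0Inner τ τ) / 2 := by
    intro η τ hη hτ
    rw [CB_eq_curvForm R hR3 hη.1 hτ.1, Complex.norm_real, Real.norm_eq_abs]
    exact hbil η τ hη hτ
  have hHH : ∀ η τ, MemH0 η → MemH0 τ → h0Inner η η = 2 → h0Inner τ τ = 2 →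
      ‖CB R η τ‖ ≤ 2 * K := by
    intro η τ hη hτ e1 e2
    have := hCB η τ hη hτ
    rw [e1, e2] at this
    linarith
  -- Mm decomposition
  set c : ℂ := (2⁻¹ : ℂ) with hc
  set d : ℂ := -Complex.I * 2⁻¹ with hd
  have hcabs : ‖c‖ = 2⁻¹ := by simp [hc]
  have hdabs : ‖d‖ = 2⁻¹ := by simp [hd]
  have hMdec : ∀ a b : Fin n, Mm a b = c • Smat a b + d • Amat a b := by
    intro a b
    ext x y
    simp only [Mm, Smat, Amat, Matrix.add_apply, Matrix.smul_apply, Matrix.sub_apply,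
      Matrix.of_apply, smul_eq_mul, hc, hd]
    have : -Complex.I * 2⁻¹ * (Complex.I *
        ((if x = a ∧ y = b then (1:ℂ) else 0) - if x = b ∧ y = a then (1:ℂ) else 0))
        = 2⁻¹ * ((if x = a ∧ y = b then (1:ℂ) else 0) - if x = b ∧ y = a then (1:ℂ) else 0) := by
      rw [show -Complex.I * 2⁻¹ * (Complex.I * _) = -(Complex.I*Complex.I) * 2⁻¹ *
        ((if x = a ∧ y = b then (1:ℂ) else 0) - if x = b ∧ y = a then (1:ℂ) else 0) by ring,
        Complex.I_mul_I]
      ring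
    rw [this]
    ring
  -- C1
  have hC1 : ∀ p q s t : Fin n, p ≠ q → s ≠ t → ‖R p q s t‖ ≤ 2 * K := by
    intro p q s t hpq hst
    have h1 : R p q s t = CB R (Mm q p) (Mm t s) := (CB_Mm R q p t s).symm
    have hexp : CB R (Mm q p) (Mm t s)
        = c * (c * CB R (Smat q p) (Smat t s)) + c * (d * CB R (Smat q p) (Amat t s))
          + (d * (c * CB R (Amat q p) (Smat t s)) + d * (d * CB R (Amat q p) (Amat t s))) := by
      conv_lhs => rw [hMdec q p, hMdec t s]
      simp only [CB_add_left, CB_add_right, CB_smul_left, CB_smul_right]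
      ring
    have t1 := hHH _ _ (memH0_Smat hpq.symm) (memH0_Smat hst.symm)
      (ip_SS hpq.symm) (ip_SS hst.symm)
    have t2 := hHH _ _ (memH0_Smat hpq.symm) (memH0_Amat hst.symm)
      (ip_SS hpq.symm) (ip_AA hst.symm)
    have t3 := hHH _ _ (memH0_Amat hpq.symm) (memH0_Smat hst.symm)
      (ip_AA hpq.symm) (ip_SS hst.symm)
    have t4 := hHH _ _ (memH0_Amat hpq.symm) (memH0_Amat hst.symm)
      (ip_AA hpq.symm) (ip_AA hst.symm)
    rw [h1, hexp]
    calc ‖_‖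
        ≤ ‖c * (c * CB R (Smat q p) (Smat t s))‖
          + ‖c * (d * CB R (Smat q p) (Amat t s))‖
          + ‖d * (c * CB R (Amat q p) (Smat t s))
            + d * (d * CB R (Amat q p) (Amat t s))‖ := habs3 _ _ _
      _ ≤ ‖c * (c * CB R (Smat q p) (Smat t s))‖
          + ‖c * (d * CB R (Smat q p) (Amat t s))‖
          + (‖d * (c * CB R (Amat q p) (Smat t s))‖
            + ‖d * (d * CB R (Amat q p) (Amat t s))‖) := by
          have := norm_add_le (d * (c * CB R (Amat q p) (Smat t s)))
            (d * (d * CB R (Amat q p) (Amat t s)))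
          linarith
      _ ≤ 2 * K := by
          simp only [norm_mul, hcabs, hdabs]
          nlinarith [t1, t2, t3, t4, norm_nonneg (CB R (Smat q p) (Smat t s)),
            norm_nonneg (CB R (Smat q p) (Amat t s)),
            norm_nonneg (CB R (Amat q p) (Smat t s)),
            norm_nonneg (CB R (Amat q p) (Amat t s))]
  -- C2 : diagonal pairs
  have hC2 : ∀ a b : Fin n, a ≠ b → ‖R a a b b‖ ≤ 2 * K := by
    intro a b hab
    rw [hR1 a a b b]
    exact hC1 b a a b (Ne.symm hab) hab
  -- C3 : R a a a b
  have hC3 : ∀ a b : Fin n, a ≠ b → ‖R a a a b‖ ≤ 4 * K := by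
    intro a b hab
    obtain ⟨e, hea, heb⟩ := exists_third hn a b
    have hsplit : Mm a a = Dmat a e + Mm e e := by
      rw [Dmat]; ext x y; simp [Matrix.add_apply, Matrix.sub_apply]
    have h1 : R a a a b = CB R (Mm a a) (Mm b a) := by rw [CB_Mm]
    have h1' : CB R (Mm a a) (Mm b a) = CB R (Dmat a e) (Mm b a) + CB R (Mm e e) (Mm b a) := by
      rw [hsplit, CB_add_left]
    have h2' : CB R (Mm e e) (Mm b a) = R e e a b := CB_Mm R e e b a
    have hDbound : ‖CB R (Dmat a e) (Mm b a)‖ ≤ 2 * K := by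
      have hexp : CB R (Dmat a e) (Mm b a)
          = c * CB R (Dmat a e) (Smat b a) + d * CB R (Dmat a e) (Amat b a) := by
        conv_lhs => rw [hMdec b a]
        rw [CB_add_right, CB_smul_right, CB_smul_right]
      have u1 := hHH _ _ (memH0_Dmat hea.symm) (memH0_Smat (Ne.symm hab))
        (ip_DD hea.symm) (ip_SS (Ne.symm hab))
      have u2 := hHH _ _ (memH0_Dmat hea.symm) (memH0_Amat (Ne.symm hab))
        (ip_DD hea.symm) (ip_AA (Ne.symm hab))
      rw [hexp]
      calc ‖_‖ ≤ ‖c * CB R (Dmat a e) (Smat b a)‖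
            + ‖d * CB R (Dmat a e) (Amat b a)‖ := norm_add_le _ _
        _ ≤ 2 * K := by
            simp only [norm_mul, hcabs, hdabs]
            nlinarith [u1, u2, norm_nonneg (CB R (Dmat a e) (Smat b a)),
              norm_nonneg (CB R (Dmat a e) (Amat b a))]
    have hee : ‖R e e a b‖ ≤ 2 * K := by
      rw [hR1 e e a b]
      exact hC1 a e e b (Ne.symm hea) heb
    rw [h1, h1']
    calc ‖_‖ ≤ ‖CB R (Dmat a e) (Mm b a)‖
          + ‖CB R (Mm e e) (Mm b a)‖ := norm_add_le _ _
      _ ≤ 4 * K := by rw [h2']; linarith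
  have hC3' : ∀ a b : Fin n, a ≠ b → ‖R a a b a‖ ≤ 4 * K := by
    intro a b hab
    have h0 := congrArg norm (hR3 a a b a)
    rw [Complex.norm_conj] at h0
    rw [h0]
    exact hC3 a b hab
  -- C4 : R a a a a
  have hC4 : ∀ a : Fin n, ‖R a a a a‖ ≤ 9 * K := by
    intro a
    obtain ⟨b, hba, _⟩ := exists_third hn a a
    obtain ⟨e, hea, heb⟩ := exists_third hn a b
    have hDexp : ∀ x y : Fin n, CB R (Dmat x y) (Dmat x y)
        = R x x x x - R x x y y - R y y x x + R y y y y := by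
      intro x y
      rw [Dmat, CB_sub_left, CB_sub_right, CB_sub_right, CB_Mm, CB_Mm, CB_Mm, CB_Mm]
      ring
    have hDQ : ∀ x y : Fin n, x ≠ y → ‖CB R (Dmat x y) (Dmat x y)‖ ≤ 2 * K := by
      intro x y hxy
      exact hHH _ _ (memH0_Dmat hxy) (memH0_Dmat hxy) (ip_DD hxy) (ip_DD hxy)
    have hid : (R a a a a : ℂ) = (CB R (Dmat a b) (Dmat a b) + CB R (Dmat a e) (Dmat a e)
        - CB R (Dmat b e) (Dmat b e)
        + R a a b b + R b b a a + R a a e e + R e e a a - R b b e e - R e e b b) / 2 := by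
      rw [hDexp a b, hDexp a e, hDexp b e]
      ring
    rw [hid]
    have hbe : b ≠ e := Ne.symm heb
    have q1 := hDQ a b (Ne.symm hba)
    have q2 := hDQ a e (Ne.symm hea)
    have q3 := hDQ b e hbe
    have p1 := hC2 a b (Ne.symm hba)
    have p2 := hC2 b a hba
    have p3 := hC2 a e (Ne.symm hea)
    have p4 := hC2 e a hea
    have p5 := hC2 b e hbe
    have p6 := hC2 e b heb
    rw [norm_div, Complex.norm_two]
    have htri : ‖CB R (Dmat a b) (Dmat a b) + CB R (Dmat a e) (Dmat a e)
        - CB R (Dmat b e) (Dmat b e)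
        + R a a b b + R b b a a + R a a e e + R e e a a - R b b e e - R e e b b‖
        ≤ 18 * K := by
      have step : ∀ (u v : ℂ) (bu bv : ℝ), ‖u‖ ≤ bu → ‖v‖ ≤ bv →
          ‖u + v‖ ≤ bu + bv := by
        intro u v bu bv h1 h2
        calc ‖u+v‖ ≤ ‖u‖ + ‖v‖ := norm_add_le _ _
          _ ≤ bu + bv := by linarith
      have stepm : ∀ (u v : ℂ) (bu bv : ℝ), ‖u‖ ≤ bu → ‖v‖ ≤ bv →
          ‖u - v‖ ≤ bu + bv := by
        intro u v bu bv h1 h2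
        rw [sub_eq_add_neg]
        have hnv : ‖-v‖ = ‖v‖ := by simp
        calc ‖u + -v‖ ≤ ‖u‖ + ‖-v‖ := norm_add_le _ _
          _ ≤ bu + bv := by rw [hnv]; linarith
      have b1 := step _ _ _ _ q1 q2
      have b2 := stepm _ _ _ _ b1 q3
      have b3 := step _ _ _ _ b2 p1
      have b4 := step _ _ _ _ b3 p2
      have b5 := step _ _ _ _ b4 p3
      have b6 := step _ _ _ _ b5 p4
      have b7 := stepm _ _ _ _ b6 p5
      have b8 := stepm _ _ _ _ b7 p6
      calc ‖_‖ ≤ 2*K + 2*K + 2*K + 2*K + 2*K + 2*K + 2*K + 2*K + 2*K := b8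
        _ = 18 * K := by ring
    linarith [htri]
  -- conjugation invariance of abs
  have habsc : ∀ p q s t : Fin n, ‖R p q s t‖ = ‖R q p t s‖ := by
    intro p q s t
    have := congrArg norm (hR3 p q s t)
    rw [Complex.norm_conj] at this
    exact this
  -- all components
  have hC5 : ∀ i j k l, ‖R i j k l‖ ≤ 9 * K := by
    intro i j k l
    rcases eq_or_ne i j with hij|hij
    · subst hij
      rcases eq_or_ne k l with hkl|hkl
      · subst hkl
        rcases eq_or_ne i k with hik|hik
        · subst hik; exact hC4 i
        · have := hC2 i k hik; linarith
      · rcases eq_or_ne k i with hki|hki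
        · subst hki
          have := hC3 k l (by exact hkl)
          linarith
        · rcases eq_or_ne l i with hli|hli
          · subst hli
            have := hC3' l k (Ne.symm hki)
            linarith
          · rw [hR1 i i k l]
            have := hC1 k i i l hki (Ne.symm hli)
            linarith
    · rcases eq_or_ne k l with hkl|hkl
      · subst hkl
        rcases eq_or_ne k i with hki|hki
        · subst hki
          -- R k j k k with k ≠ j
          have e1 : ‖R k j k k‖ = ‖R j k k k‖ := habsc k j k k
          have e2 : R j k k k = R k k j k := hR1 j k k k
          have := hC3' k j hij
          rw [e1, e2]
          linarith
        · rcases eq_or_ne k j with hkj|hkj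
          · subst hkj
            -- R i k k k with i ≠ k
            have e1 : ‖R i k k k‖ = ‖R k i k k‖ := habsc i k k k
            have e2 : R k i k k = R k k k i := hR2 k i k k
            have e3 : ‖R k k k i‖ = ‖R k k i k‖ := habsc k k k i
            have := hC3' k i hki
            rw [e1, e2, e3]
            linarith
          · rw [hR2 i j k k]
            have := hC1 i k k j (Ne.symm hki) hkj
            linarith
      · have := hC1 i j k l hij hkl
        linarith
  intro i j k l
  have := hC5 i j k l
  nlinarith [hK0, hKr]

end KCT

/-- Theorem 1.2, main estimate (pointwise form): there is a dimensional constant `C n > 0`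
such that for every `n ≥ 3` and every Kähler curvature-type tensor with 2-nonnegative
traceless bisectional curvature operator, the scalar curvature `r` is nonnegative and
`|R(i,j,k,l)| ≤ C n · r` for all indices. -/
theorem bisectional_bounded_by_scalar :
    ∃ C : ℕ → ℝ, (∀ n, 0 < C n) ∧
      ∀ (n : ℕ), 3 ≤ n → ∀ R : Fin n → Fin n → Fin n → Fin n → ℂ,
        IsKahlerCurvTensor R → TwoNonnegTBC R →
        0 ≤ scalarCurv R ∧
        ∀ i j k l : Fin n, ‖R i j k l‖ ≤ C n * scalarCurv R := by
  refine ⟨fun _ => 9, fun _ => by norm_num, ?_⟩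
  intro n hn R hR h2
  exact KCT.component_bound hn R hR h2
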